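/- arXiv:2402.12915 — 3 statements merged into one kernel-verified Lean document; each statement's English description precedes it below -/
import Mathlib

section
/- For any simple connected graph G on n vertices with maximum degree Δ, largest adjacency eigenvalue λ_max, and smallest adjacency eigenvalue λ_min, we have -λ_min · λ_max ≥ Δ. -/
open Finset

/-- The adjacency matrix of a finite simple graph is hermitian over `ℝ`. -/
theorem adjMatrix_isHermitian {V : Type*} [Fintype V] (G : SimpleGraph V)
    [DecidableRel G.Adj] : (G.adjMatrix ℝ).IsHermitian := by
  rw [Matrix.IsHermitian, Matrix.conjTranspose_eq_transpose_of_trivial]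
  exact G.isSymm_adjMatrix

/-- The multiset of adjacency eigenvalues of a finite simple graph. -/
noncomputable def eigMultiset {V : Type*} [Fintype V] (G : SimpleGraph V) : Multiset ℝ := by
  classical exact Finset.univ.val.map (adjMatrix_isHermitian G).eigenvalues

/-- The largest adjacency eigenvalue. -/
noncomputable def lamMax {V : Type*} [Fintype V] [Nonempty V] (G : SimpleGraph V) : ℝ := by
  classical exact Finset.univ.sup' Finset.univ_nonempty (adjMatrix_isHermitian G).eigenvalues

/-- The smallest adjacency eigenvalue. -/
noncomputable def lamMin {V : Type*} [Fintype V] [Nonempty V] (G : SimpleGraph V) : ℝ := by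
  classical exact Finset.univ.inf' Finset.univ_nonempty (adjMatrix_isHermitian G).eigenvalues

/-- The cone over a graph: a new vertex (`none`) joined to all vertices of `G`. -/
def cone {V : Type*} (G : SimpleGraph V) : SimpleGraph (Option V) where
  Adj x y := match x, y with
    | none, none => False
    | none, some _ => True
    | some _, none => True
    | some u, some v => G.Adj u v
  symm := ⟨by rintro (_|u) (_|v) h <;> simp_all <;> exact h.symm⟩
  loopless := ⟨by rintro (_|u) h <;> simp_all⟩

set_option maxHeartbeats 1000000 in
/-- For any simple connected graph `G` on at least two vertices with maximum degree `Δ`,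
we have `-λ_min · λ_max ≥ Δ`. -/
theorem stmt0 {V : Type*} [Fintype V] [Nonempty V] (G : SimpleGraph V) [DecidableRel G.Adj]
    (hn : 2 ≤ Fintype.card V) (hG : G.Connected) :
    -(lamMin G) * lamMax G ≥ (G.maxDegree : ℝ) := by
  classical
  suffices gen : ∀ (d : DecidableRel G.Adj) (e : DecidableEq V),
      (G.maxDegree : ℝ) ≤
        -(Finset.univ.inf' Finset.univ_nonempty
            (@Matrix.IsHermitian.eigenvalues ℝ _ V _ _ e (@adjMatrix_isHermitian V _ G d))) *
          (Finset.univ.sup' Finset.univ_nonempty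
            (@Matrix.IsHermitian.eigenvalues ℝ _ V _ _ e (@adjMatrix_isHermitian V _ G d))) by
    rw [ge_iff_le]
    have h2 := gen (fun a b => Classical.propDecidable _) (fun a b => Classical.propDecidable _)
    have hmd : @SimpleGraph.maxDegree V G _ (fun a b => Classical.propDecidable _)
        = G.maxDegree := by congr!
    rw [hmd] at h2
    unfold lamMin lamMax
    exact h2
  intro d e
  obtain ⟨v, hv⟩ := G.exists_maximal_degree_vertex
  set hA := adjMatrix_isHermitian G with hhA
  set A := G.adjMatrix ℝ with hAdef
  set U : Matrix V V ℝ := (hA.eigenvectorUnitary : Matrix V V ℝ) with hUdef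
  set μ := hA.eigenvalues with hμ
  have hUmem : U ∈ Matrix.unitaryGroup V ℝ := hA.eigenvectorUnitary.2
  have hUU : U * star U = 1 := Matrix.mem_unitaryGroup_iff.mp hUmem
  have hUU' : star U * U = 1 := Matrix.mem_unitaryGroup_iff'.mp hUmem
  have hspec : A = U * Matrix.diagonal μ * star U := by
    simpa using hA.spectral_theorem
  have key : ∀ dg : V → ℝ, (U * Matrix.diagonal dg * star U) v v = ∑ i, dg i * U v i ^ 2 := by
    intro dg
    rw [Matrix.mul_apply]
    refine Finset.sum_congr rfl fun i _ => ?_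
    simp [Matrix.mul_diagonal, Matrix.conjTranspose_apply, sq]
    ring
  have h0 : ∑ i, μ i * U v i ^ 2 = 0 := by
    have := congrArg (fun M : Matrix V V ℝ => M v v) hspec
    simp only [key] at this
    rw [← this]
    simp [hAdef]
  have hAA : A * A = U * Matrix.diagonal (fun i => μ i * μ i) * star U := by
    rw [hspec]
    simp only [Matrix.mul_assoc]
    rw [← Matrix.mul_assoc (star U) U, hUU', Matrix.one_mul,
      ← Matrix.mul_assoc (Matrix.diagonal μ), Matrix.diagonal_mul_diagonal]
  have hdeg : ∑ i, μ i * μ i * U v i ^ 2 = (G.degree v : ℝ) := by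
    have := congrArg (fun M : Matrix V V ℝ => M v v) hAA
    simp only [key] at this
    rw [← this, hAdef]
    exact SimpleGraph.adjMatrix_mul_self_apply_self G v
  have h1 : ∑ i, U v i ^ 2 = 1 := by
    have := congrArg (fun M : Matrix V V ℝ => M v v) hUU
    simp only [Matrix.mul_apply, Matrix.conjTranspose_apply, Matrix.star_apply, star_trivial,
      Matrix.one_apply_eq, ← sq] at this
    exact this
  set a := Finset.univ.inf' Finset.univ_nonempty μ with ha
  set b := Finset.univ.sup' Finset.univ_nonempty μ with hb
  have hlmin : ∀ i, a ≤ μ i := fun i => Finset.inf'_le _ (Finset.mem_univ i)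
  have hlmax : ∀ i, μ i ≤ b := fun i => Finset.le_sup' _ (Finset.mem_univ i)
  have hsum : ∑ i, U v i ^ 2 * ((μ i - a) * (μ i - b)) ≤ 0 := by
    refine Finset.sum_nonpos fun i _ => ?_
    have h1' : 0 ≤ U v i ^ 2 * (μ i - a) :=
      mul_nonneg (sq_nonneg _) (by linarith [hlmin i])
    rw [← mul_assoc]
    exact mul_nonpos_of_nonneg_of_nonpos h1' (by linarith [hlmax i])
  have expand : ∑ i, U v i ^ 2 * ((μ i - a) * (μ i - b))
      = (G.degree v : ℝ) + a * b := by
    have e' : ∀ i, U v i ^ 2 * ((μ i - a) * (μ i - b))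
        = μ i * μ i * U v i ^ 2 - (a + b) * (μ i * U v i ^ 2)
          + (a * b) * U v i ^ 2 := fun i => by ring
    simp_rw [e']
    rw [Finset.sum_add_distrib, Finset.sum_sub_distrib, ← Finset.mul_sum, ← Finset.mul_sum,
      hdeg, h0, h1]
    ring
  rw [expand] at hsum
  have hdv : (G.maxDegree : ℝ) = (G.degree v : ℝ) := by rw [hv]
  rw [hdv, neg_mul]
  linarith
end

section
/- If G is a connected bipartite graph with parts V_1, V_2 having mean degrees d̄_1, d̄_2, then λ_1² ≥ d̄_1·d̄_2 where λ_1 is the spectral radius, with equality if and only if G is biregular with degrees k_1 = d̄_1 and k_2 = d̄_2. -/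
open Finset Matrix

section Rayleigh

set_option linter.unusedSectionVars false

variable {n : Type*} [Fintype n] [DecidableEq n] [Nonempty n] {A : Matrix n n ℝ}

/-- The largest eigenvalue of a real hermitian matrix. -/
noncomputable def lmax (hA : A.IsHermitian) : ℝ :=
  Finset.univ.sup' Finset.univ_nonempty hA.eigenvalues

lemma star_coe_transpose (hA : A.IsHermitian) :
    star (hA.eigenvectorUnitary : Matrix n n ℝ) = (hA.eigenvectorUnitary : Matrix n n ℝ)ᵀ := by
  rw [Matrix.star_eq_conjTranspose, Matrix.conjTranspose_eq_transpose_of_trivial]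

lemma mulVec_decomp (hA : A.IsHermitian) (x : n → ℝ) :
    A *ᵥ x = (hA.eigenvectorUnitary : Matrix n n ℝ) *ᵥ
      (Matrix.diagonal hA.eigenvalues *ᵥ (star (hA.eigenvectorUnitary : Matrix n n ℝ) *ᵥ x)) := by
  conv_lhs => rw [hA.spectral_theorem]
  simp [Matrix.mulVec_mulVec, Matrix.mul_assoc]

lemma dot_mulVec_U (hA : A.IsHermitian) (x w : n → ℝ) :
    x ⬝ᵥ ((hA.eigenvectorUnitary : Matrix n n ℝ) *ᵥ w)
      = (star (hA.eigenvectorUnitary : Matrix n n ℝ) *ᵥ x) ⬝ᵥ w := by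
  rw [star_coe_transpose, Matrix.dotProduct_mulVec, Matrix.mulVec_transpose]

lemma U_star_mulVec (hA : A.IsHermitian) (x : n → ℝ) :
    (hA.eigenvectorUnitary : Matrix n n ℝ) *ᵥ (star (hA.eigenvectorUnitary : Matrix n n ℝ) *ᵥ x) = x := by
  rw [Matrix.mulVec_mulVec]
  have h : (hA.eigenvectorUnitary : Matrix n n ℝ) * star (hA.eigenvectorUnitary : Matrix n n ℝ) = 1 :=
    Matrix.mem_unitaryGroup_iff.mp hA.eigenvectorUnitary.2
  rw [h, Matrix.one_mulVec]

lemma key_decomp (hA : A.IsHermitian) (x : n → ℝ) :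
    x ⬝ᵥ (A *ᵥ x) = ∑ i, hA.eigenvalues i * ((star (hA.eigenvectorUnitary : Matrix n n ℝ) *ᵥ x) i)^2 := by
  rw [mulVec_decomp hA x, dot_mulVec_U]
  set y := star (hA.eigenvectorUnitary : Matrix n n ℝ) *ᵥ x
  simp [dotProduct, Matrix.mulVec_diagonal]
  exact Finset.sum_congr rfl fun i _ => by ring

lemma dot_self_decomp (hA : A.IsHermitian) (x : n → ℝ) :
    x ⬝ᵥ x = ∑ i, ((star (hA.eigenvectorUnitary : Matrix n n ℝ) *ᵥ x) i)^2 := by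
  set y := star (hA.eigenvectorUnitary : Matrix n n ℝ) *ᵥ x with hy
  have h1 : x ⬝ᵥ x = y ⬝ᵥ y := by
    calc x ⬝ᵥ x = x ⬝ᵥ ((hA.eigenvectorUnitary : Matrix n n ℝ) *ᵥ y) := by rw [hy, U_star_mulVec]
      _ = y ⬝ᵥ y := by rw [dot_mulVec_U, hy]
  rw [h1]
  simp [dotProduct, sq]

lemma rayleigh_le (hA : A.IsHermitian) (x : n → ℝ) :
    x ⬝ᵥ (A *ᵥ x) ≤ lmax hA * (x ⬝ᵥ x) := by
  rw [key_decomp hA x, dot_self_decomp hA x, Finset.mul_sum]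
  refine Finset.sum_le_sum fun i _ => ?_
  exact mul_le_mul_of_nonneg_right (Finset.le_sup' _ (Finset.mem_univ i)) (sq_nonneg _)

lemma rayleigh_eq (hA : A.IsHermitian) (x : n → ℝ)
    (h : x ⬝ᵥ (A *ᵥ x) = lmax hA * (x ⬝ᵥ x)) : A *ᵥ x = lmax hA • x := by
  set U := (hA.eigenvectorUnitary : Matrix n n ℝ)
  set y := star U *ᵥ x with hy
  have hsum : ∑ i, (lmax hA - hA.eigenvalues i) * (y i)^2 = 0 := by
    have h1 := key_decomp hA x
    have h2 := dot_self_decomp hA x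
    rw [← hy] at h1 h2
    rw [h1, h2] at h
    simp only [sub_mul, Finset.sum_sub_distrib]
    rw [← Finset.mul_sum]
    linarith
  have hterm : ∀ i ∈ Finset.univ, (lmax hA - hA.eigenvalues i) * (y i)^2 = 0 := by
    refine (Finset.sum_eq_zero_iff_of_nonneg fun i _ => ?_).mp hsum
    have : hA.eigenvalues i ≤ lmax hA := Finset.le_sup' _ (Finset.mem_univ i)
    exact mul_nonneg (by linarith) (sq_nonneg _)
  have hDy : Matrix.diagonal hA.eigenvalues *ᵥ y = lmax hA • y := by
    funext i
    have := hterm i (Finset.mem_univ i)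
    rcases mul_eq_zero.mp this with h0 | h0
    · have he : hA.eigenvalues i = lmax hA := by linarith
      simp [Matrix.mulVec_diagonal, he]
    · have h00 : y i = 0 := sq_eq_zero_iff.mp h0
      simp [Matrix.mulVec_diagonal, h00]
  calc A *ᵥ x = U *ᵥ (Matrix.diagonal hA.eigenvalues *ᵥ y) := mulVec_decomp hA x
    _ = U *ᵥ (lmax hA • y) := by rw [hDy]
    _ = lmax hA • (U *ᵥ y) := by rw [Matrix.mulVec_smul]
    _ = lmax hA • x := by rw [hy, U_star_mulVec]

lemma exists_eigvec (hA : A.IsHermitian) :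
    ∃ y : n → ℝ, y ≠ 0 ∧ A *ᵥ y = lmax hA • y := by
  obtain ⟨j, -, hj⟩ := Finset.exists_mem_eq_sup' (Finset.univ_nonempty (α := n)) hA.eigenvalues
  refine ⟨⇑(hA.eigenvectorBasis j), ?_, ?_⟩
  · intro h0
    have := hA.eigenvectorBasis.orthonormal.1 j
    rw [show (hA.eigenvectorBasis j) = 0 from PiLp.ext fun i => by simpa using congrFun h0 i] at this
    simp at this
  · rw [hA.mulVec_eigenvectorBasis, lmax, ← hj]

end Rayleigh

lemma eig_congr' {n : Type*} [Fintype n] {A B : Matrix n n ℝ} (i1 i2 : DecidableEq n) (h : A = B)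
    (hA : A.IsHermitian) (hB : B.IsHermitian) :
    @Matrix.IsHermitian.eigenvalues ℝ _ n _ A i1 hA = @Matrix.IsHermitian.eigenvalues ℝ _ n _ B i2 hB := by
  subst h
  have : i1 = i2 := by funext a b; exact Subsingleton.elim _ _
  subst this
  rfl

lemma lamMax_eq_lmax {V : Type*} [Fintype V] [DecidableEq V] [Nonempty V] (G : SimpleGraph V)
    [DecidableRel G.Adj] : lamMax G = lmax (adjMatrix_isHermitian G) := by
  unfold lamMax lmax
  exact congrArg (Finset.univ.sup' Finset.univ_nonempty)
    (eig_congr' _ _ (by ext i j; by_cases h : G.Adj i j <;> simp [h]) _ _)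

/-- For a connected bipartite graph with parts `V₁, V₂` of mean degrees `d̄₁, d̄₂`,
`λ₁² ≥ d̄₁·d̄₂`, with equality iff the graph is biregular with degrees `d̄₁` and `d̄₂`. -/
theorem stmt16 {V : Type*} [Fintype V] [DecidableEq V] [Nonempty V] (G : SimpleGraph V) [DecidableRel G.Adj]
    (V₁ V₂ : Finset V)
    (hpart : V₁ ∪ V₂ = Finset.univ) (hdisj : Disjoint V₁ V₂)
    (hedge : ∀ v w, G.Adj v w → (v ∈ V₁ ∧ w ∈ V₂) ∨ (v ∈ V₂ ∧ w ∈ V₁))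
    (h1 : V₁.Nonempty) (h2 : V₂.Nonempty) (hconn : G.Connected)
    (d₁ d₂ : ℝ)
    (hd₁ : d₁ = (∑ v ∈ V₁, (G.degree v : ℝ)) / (V₁.card : ℝ))
    (hd₂ : d₂ = (∑ v ∈ V₂, (G.degree v : ℝ)) / (V₂.card : ℝ)) :
    lamMax G ^ 2 ≥ d₁ * d₂ ∧
    (lamMax G ^ 2 = d₁ * d₂ ↔
      (∀ v ∈ V₁, (G.degree v : ℝ) = d₁) ∧ (∀ v ∈ V₂, (G.degree v : ℝ) = d₂)) := by
  have hA := adjMatrix_isHermitian G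
  rw [lamMax_eq_lmax G]
  set L := lmax hA with hLdef
  -- basic membership facts
  have hmem : ∀ v : V, v ∉ V₁ → v ∈ V₂ := by
    intro v hv
    have hu : v ∈ V₁ ∪ V₂ := by rw [hpart]; exact Finset.mem_univ v
    rcases Finset.mem_union.mp hu with h | h
    · exact absurd h hv
    · exact h
  have hnot12 : ∀ v ∈ V₁, v ∉ V₂ := fun v hv => Finset.disjoint_left.mp hdisj hv
  have hadj1 : ∀ v ∈ V₁, ∀ w, G.Adj v w → w ∉ V₁ := by
    intro v hv w hw
    rcases hedge v w hw with ⟨_, hw2⟩ | ⟨hv2, _⟩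
    · exact Finset.disjoint_right.mp hdisj hw2
    · exact absurd hv2 (hnot12 v hv)
  have hadj2 : ∀ v, v ∉ V₁ → ∀ w, G.Adj v w → w ∈ V₁ := by
    intro v hv w hw
    rcases hedge v w hw with ⟨hv1, _⟩ | ⟨_, hw1⟩
    · exact absurd hv1 hv
    · exact hw1
  -- every degree is positive
  have hdegpos : ∀ v : V, 0 < G.degree v := by
    intro v
    rw [SimpleGraph.degree_pos_iff_exists_adj]
    obtain ⟨u₁, hu₁⟩ := h1
    obtain ⟨u₂, hu₂⟩ := h2
    have hne : u₁ ≠ u₂ := fun h => (hnot12 u₁ hu₁) (h ▸ hu₂)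
    have : Nontrivial V := ⟨⟨u₁, u₂, hne⟩⟩
    obtain ⟨w, hw⟩ := exists_ne v
    obtain ⟨p⟩ := hconn.preconnected v w
    cases p with
    | nil => exact absurd rfl hw
    | cons h q => exact ⟨_, h⟩
  -- positivity of means
  have hn₁ : (0:ℝ) < (V₁.card : ℝ) := by exact_mod_cast Finset.card_pos.mpr h1
  have hn₂ : (0:ℝ) < (V₂.card : ℝ) := by exact_mod_cast Finset.card_pos.mpr h2
  have he₁ : (0:ℝ) < ∑ v ∈ V₁, (G.degree v : ℝ) :=
    Finset.sum_pos (fun v _ => by exact_mod_cast hdegpos v) h1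
  have he₂ : (0:ℝ) < ∑ v ∈ V₂, (G.degree v : ℝ) :=
    Finset.sum_pos (fun v _ => by exact_mod_cast hdegpos v) h2
  have hd₁pos : 0 < d₁ := by rw [hd₁]; positivity
  have hd₂pos : 0 < d₂ := by rw [hd₂]; positivity
  set e₁ := ∑ v ∈ V₁, (G.degree v : ℝ) with he₁def
  set e₂ := ∑ v ∈ V₂, (G.degree v : ℝ) with he₂def
  have hd₁e : d₁ * (V₁.card : ℝ) = e₁ := by rw [hd₁]; field_simp
  have hd₂e : d₂ * (V₂.card : ℝ) = e₂ := by rw [hd₂]; field_simp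
  set a := Real.sqrt d₁ with hadef
  set b := Real.sqrt d₂ with hbdef
  have hapos : 0 < a := Real.sqrt_pos.mpr hd₁pos
  have hbpos : 0 < b := Real.sqrt_pos.mpr hd₂pos
  have ha2 : a * a = d₁ := Real.mul_self_sqrt hd₁pos.le
  have hb2 : b * b = d₂ := Real.mul_self_sqrt hd₂pos.le
  set x : V → ℝ := fun v => if v ∈ V₁ then a else b with hx
  -- computation of A *ᵥ x
  have hAx1 : ∀ v ∈ V₁, (G.adjMatrix ℝ *ᵥ x) v = b * (G.degree v : ℝ) := by
    intro v hv
    rw [SimpleGraph.adjMatrix_mulVec_apply]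
    rw [Finset.sum_congr rfl fun w hw => show x w = b by
      rw [hx]; exact if_neg (hadj1 v hv w ((G.mem_neighborFinset v w).mp hw))]
    rw [Finset.sum_const, G.card_neighborFinset_eq_degree, nsmul_eq_mul, mul_comm]
  have hAx2 : ∀ v, v ∉ V₁ → (G.adjMatrix ℝ *ᵥ x) v = a * (G.degree v : ℝ) := by
    intro v hv
    rw [SimpleGraph.adjMatrix_mulVec_apply]
    rw [Finset.sum_congr rfl fun w hw => show x w = a by
      rw [hx]; exact if_pos (hadj2 v hv w ((G.mem_neighborFinset v w).mp hw))]
    rw [Finset.sum_const, G.card_neighborFinset_eq_degree, nsmul_eq_mul, mul_comm]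
  have hsplit : ∀ f : V → ℝ, ∑ v, f v = ∑ v ∈ V₁, f v + ∑ v ∈ V₂, f v := by
    intro f; rw [← Finset.sum_union hdisj, hpart]
  have hxAx : x ⬝ᵥ (G.adjMatrix ℝ *ᵥ x) = a * b * (e₁ + e₂) := by
    rw [dotProduct, hsplit]
    have t1 : ∑ v ∈ V₁, x v * (G.adjMatrix ℝ *ᵥ x) v = a * b * e₁ := by
      rw [he₁def, Finset.mul_sum]
      refine Finset.sum_congr rfl fun v hv => ?_
      rw [hAx1 v hv, hx]
      simp only [if_pos hv]
      ring
    have t2 : ∑ v ∈ V₂, x v * (G.adjMatrix ℝ *ᵥ x) v = a * b * e₂ := by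
      rw [he₂def, Finset.mul_sum]
      refine Finset.sum_congr rfl fun v hv => ?_
      have hv1 : v ∉ V₁ := Finset.disjoint_right.mp hdisj hv
      rw [hAx2 v hv1, hx]
      simp only [if_neg hv1]
      ring
    rw [t1, t2, mul_add]
  have hxx : x ⬝ᵥ x = e₁ + e₂ := by
    rw [dotProduct, hsplit]
    have t1 : ∑ v ∈ V₁, x v * x v = e₁ := by
      rw [Finset.sum_congr rfl fun v hv => show x v * x v = d₁ by
        rw [hx]; simp only [if_pos hv]; exact ha2]
      rw [Finset.sum_const, nsmul_eq_mul, mul_comm, hd₁e]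
    have t2 : ∑ v ∈ V₂, x v * x v = e₂ := by
      rw [Finset.sum_congr rfl fun v hv => show x v * x v = d₂ by
        rw [hx]; simp only [if_neg (Finset.disjoint_right.mp hdisj hv)]; exact hb2]
      rw [Finset.sum_const, nsmul_eq_mul, mul_comm, hd₂e]
    rw [t1, t2]
  -- the Rayleigh lower bound
  have hE : (0:ℝ) < e₁ + e₂ := by linarith
  have hab : a * b ≤ L := by
    have := rayleigh_le hA x
    rw [hxAx, hxx] at this
    have h' : a * b * (e₁ + e₂) ≤ L * (e₁ + e₂) := this
    exact le_of_mul_le_mul_right h' hE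
  have habpos : 0 < a * b := mul_pos hapos hbpos
  have hLpos : 0 < L := lt_of_lt_of_le habpos hab
  have habsq : (a * b) ^ 2 = d₁ * d₂ := by
    rw [mul_pow, sq, sq, ha2, hb2]
  have hge : d₁ * d₂ ≤ L ^ 2 := by
    rw [← habsq]
    exact pow_le_pow_left₀ habpos.le hab 2
  refine ⟨hge, ?_, ?_⟩
  · -- equality implies biregular
    intro hEq
    have hLe : L ≤ a * b := by nlinarith
    have hLab : L = a * b := le_antisymm hLe hab
    have heig : G.adjMatrix ℝ *ᵥ x = L • x := by
      apply rayleigh_eq hA x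
      rw [hxAx, hxx, ← hLdef, hLab]
    constructor
    · intro v hv
      have hv' := congrFun heig v
      rw [hAx1 v hv] at hv'
      have hxv : x v = a := by rw [hx]; exact if_pos hv
      rw [Pi.smul_apply, smul_eq_mul, hxv, hLab] at hv'
      have h3 : b * (G.degree v : ℝ) = b * d₁ := by
        rw [hv', ← ha2]; ring
      exact mul_left_cancel₀ hbpos.ne' h3
    · intro v hv
      have hv1 : v ∉ V₁ := Finset.disjoint_right.mp hdisj hv
      have hv' := congrFun heig v
      rw [hAx2 v hv1] at hv'
      have hxv : x v = b := by rw [hx]; exact if_neg hv1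
      rw [Pi.smul_apply, smul_eq_mul, hxv, hLab] at hv'
      have h3 : a * (G.degree v : ℝ) = a * d₂ := by
        rw [hv', ← hb2]; ring
      exact mul_left_cancel₀ hapos.ne' h3
  · -- biregular implies equality
    rintro ⟨hr1, hr2⟩
    refine le_antisymm ?_ hge
    obtain ⟨y, hy0, hy⟩ := exists_eigvec hA
    obtain ⟨v₀, -, hv₀⟩ := Finset.exists_max_image Finset.univ (fun v => |y v|) ⟨Classical.arbitrary V, Finset.mem_univ _⟩
    have hypos : 0 < |y v₀| := by
      obtain ⟨u, hu⟩ := Function.ne_iff.mp hy0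
      calc (0:ℝ) < |y u| := abs_pos.mpr hu
        _ ≤ |y v₀| := hv₀ u (Finset.mem_univ u)
    have hrowsum : ∀ p : V, ∑ w ∈ G.neighborFinset p, (G.degree w : ℝ) = d₁ * d₂ := by
      intro p
      by_cases hp : p ∈ V₁
      · rw [Finset.sum_congr rfl fun w hw =>
          hr2 w (by
            have hadj := (G.mem_neighborFinset p w).mp hw
            rcases hedge p w hadj with ⟨_, h⟩ | ⟨hc, _⟩
            · exact h
            · exact absurd hc (hnot12 p hp))]
        rw [Finset.sum_const, G.card_neighborFinset_eq_degree, nsmul_eq_mul, hr1 p hp]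
      · rw [Finset.sum_congr rfl fun w hw =>
          hr1 w (hadj2 p hp w ((G.mem_neighborFinset p w).mp hw))]
        rw [Finset.sum_const, G.card_neighborFinset_eq_degree, nsmul_eq_mul,
          hr2 p (hmem p hp), mul_comm]
    have hA2 : G.adjMatrix ℝ *ᵥ (G.adjMatrix ℝ *ᵥ y) = (L ^ 2) • y := by
      rw [hy, Matrix.mulVec_smul, hy, smul_smul, sq]
    have h0 : (G.adjMatrix ℝ *ᵥ (G.adjMatrix ℝ *ᵥ y)) v₀ = L ^ 2 * y v₀ := by
      rw [hA2]; rfl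
    have hinner : ∀ w : V, |(G.adjMatrix ℝ *ᵥ y) w| ≤ (G.degree w : ℝ) * |y v₀| := by
      intro w
      rw [SimpleGraph.adjMatrix_mulVec_apply]
      calc |∑ u ∈ G.neighborFinset w, y u| ≤ ∑ u ∈ G.neighborFinset w, |y u| :=
            Finset.abs_sum_le_sum_abs _ _
        _ ≤ ∑ u ∈ G.neighborFinset w, |y v₀| :=
            Finset.sum_le_sum fun u _ => hv₀ u (Finset.mem_univ u)
        _ = (G.degree w : ℝ) * |y v₀| := by
            rw [Finset.sum_const, G.card_neighborFinset_eq_degree, nsmul_eq_mul]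
    have h1 : |(G.adjMatrix ℝ *ᵥ (G.adjMatrix ℝ *ᵥ y)) v₀| ≤ d₁ * d₂ * |y v₀| := by
      rw [SimpleGraph.adjMatrix_mulVec_apply]
      calc |∑ w ∈ G.neighborFinset v₀, (G.adjMatrix ℝ *ᵥ y) w|
          ≤ ∑ w ∈ G.neighborFinset v₀, |(G.adjMatrix ℝ *ᵥ y) w| :=
            Finset.abs_sum_le_sum_abs _ _
        _ ≤ ∑ w ∈ G.neighborFinset v₀, (G.degree w : ℝ) * |y v₀| :=
            Finset.sum_le_sum fun w _ => hinner w
        _ = (∑ w ∈ G.neighborFinset v₀, (G.degree w : ℝ)) * |y v₀| := by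
            rw [Finset.sum_mul]
        _ = d₁ * d₂ * |y v₀| := by rw [hrowsum v₀]
    have hkey : L ^ 2 * |y v₀| ≤ d₁ * d₂ * |y v₀| := by
      calc L ^ 2 * |y v₀| = |L ^ 2 * y v₀| := by
            rw [abs_mul, abs_of_nonneg (sq_nonneg L)]
        _ = |(G.adjMatrix ℝ *ᵥ (G.adjMatrix ℝ *ᵥ y)) v₀| := by rw [h0]
        _ ≤ d₁ * d₂ * |y v₀| := h1
    exact le_of_mul_le_mul_right hkey hypos
end

section
/- Let G be a graph with n vertices, minimum degree δ, independence number α < n, and extreme adjacency eigenvalues λ_1 and λ_n. Then -λ_1·λ_n ≥ α·δ²/(n - α). -/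
open Finset

section Aux

open Matrix

private lemma rayleigh_bounds {V : Type*} [Fintype V] [Nonempty V] [DecidableEq V]
    {A : Matrix V V ℝ} (hA : A.IsHermitian) (x : V → ℝ) :
    (Finset.univ.inf' Finset.univ_nonempty hA.eigenvalues) * (x ⬝ᵥ x) ≤ x ⬝ᵥ (A *ᵥ x) ∧
      x ⬝ᵥ (A *ᵥ x) ≤ (Finset.univ.sup' Finset.univ_nonempty hA.eigenvalues) * (x ⬝ᵥ x) := by
  set U : Matrix V V ℝ := (hA.eigenvectorUnitary : Matrix V V ℝ) with hUdef
  have hstar : star U = Uᵀ := by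
    rw [Matrix.star_eq_conjTranspose, Matrix.conjTranspose_eq_transpose_of_trivial]
  have hUU : U * Uᵀ = 1 := by
    rw [← hstar]; exact (Matrix.mem_unitaryGroup_iff).mp hA.eigenvectorUnitary.2
  set y := x ᵥ* U with hy
  have hyx : Uᵀ *ᵥ x = y := by rw [Matrix.mulVec_transpose]
  have key1 : x ⬝ᵥ x = ∑ j, (y j) ^ 2 := by
    have : y ⬝ᵥ y = x ⬝ᵥ x := by
      nth_rewrite 1 [hy]
      rw [← hyx, Matrix.dotProduct_mulVec, Matrix.vecMul_vecMul, hUU, Matrix.vecMul_one]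
    rw [← this, dotProduct]
    exact Finset.sum_congr rfl fun j _ => (sq (y j)).symm
  have hD : Matrix.diagonal (RCLike.ofReal ∘ hA.eigenvalues) = Matrix.diagonal hA.eigenvalues := by
    congr 1
  have key2 : x ⬝ᵥ (A *ᵥ x) = ∑ j, hA.eigenvalues j * (y j) ^ 2 := by
    conv_lhs => rw [hA.spectral_theorem, Unitary.conjStarAlgAut_apply]
    rw [hD, ← hUdef, hstar, ← Matrix.mulVec_mulVec, ← Matrix.mulVec_mulVec, hyx,
      Matrix.dotProduct_mulVec, ← hy, dotProduct]
    exact Finset.sum_congr rfl fun j _ => by rw [Matrix.mulVec_diagonal]; ring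
  constructor
  · rw [key1, key2, Finset.mul_sum]
    refine Finset.sum_le_sum fun j _ => ?_
    exact mul_le_mul_of_nonneg_right (Finset.inf'_le _ (Finset.mem_univ j)) (sq_nonneg _)
  · rw [key1, key2, Finset.mul_sum]
    refine Finset.sum_le_sum fun j _ => ?_
    exact mul_le_mul_of_nonneg_right (Finset.le_sup' _ (Finset.mem_univ j)) (sq_nonneg _)

private lemma quad_ite {V : Type*} [Fintype V] [DecidableEq V] (A : Matrix V V ℝ) (S : Finset V)
    (p q : ℝ) :
    (fun v => if v ∈ S then p else q) ⬝ᵥ (A *ᵥ fun v => if v ∈ S then p else q)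
      = p * p * (∑ i ∈ S, ∑ j ∈ S, A i j) + p * q * (∑ i ∈ S, ∑ j ∈ Sᶜ, A i j)
        + q * p * (∑ i ∈ Sᶜ, ∑ j ∈ S, A i j) + q * q * (∑ i ∈ Sᶜ, ∑ j ∈ Sᶜ, A i j) := by
  have inner : ∀ i, (A *ᵥ fun v => if v ∈ S then p else q) i
      = (∑ j ∈ S, A i j) * p + (∑ j ∈ Sᶜ, A i j) * q := by
    intro i
    show ∑ j, A i j * (if j ∈ S then p else q) = _
    rw [← Finset.sum_add_sum_compl S (fun j => A i j * (if j ∈ S then p else q)),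
      Finset.sum_mul, Finset.sum_mul]
    congr 1
    · exact Finset.sum_congr rfl fun j hj => by rw [if_pos hj]
    · exact Finset.sum_congr rfl fun j hj => by rw [if_neg (Finset.mem_compl.mp hj)]
  have main : ∀ (T : Finset V) (r : ℝ),
      (∀ i ∈ T, (if i ∈ S then p else q) = r) →
      ∑ i ∈ T, (if i ∈ S then p else q) * ((∑ j ∈ S, A i j) * p + (∑ j ∈ Sᶜ, A i j) * q)
        = r * p * (∑ i ∈ T, ∑ j ∈ S, A i j) + r * q * (∑ i ∈ T, ∑ j ∈ Sᶜ, A i j) := by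
    intro T r hr
    rw [Finset.mul_sum, Finset.mul_sum, ← Finset.sum_add_distrib]
    exact Finset.sum_congr rfl fun i hi => by rw [hr i hi]; ring
  calc (fun v => if v ∈ S then p else q) ⬝ᵥ (A *ᵥ fun v => if v ∈ S then p else q)
      = ∑ i, (if i ∈ S then p else q)
          * ((∑ j ∈ S, A i j) * p + (∑ j ∈ Sᶜ, A i j) * q) := by
        rw [dotProduct]
        exact Finset.sum_congr rfl fun i _ => by rw [inner i]
    _ = (∑ i ∈ S, (if i ∈ S then p else q)
          * ((∑ j ∈ S, A i j) * p + (∑ j ∈ Sᶜ, A i j) * q))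
        + ∑ i ∈ Sᶜ, (if i ∈ S then p else q)
          * ((∑ j ∈ S, A i j) * p + (∑ j ∈ Sᶜ, A i j) * q) :=
        (Finset.sum_add_sum_compl S _).symm
    _ = (p * p * (∑ i ∈ S, ∑ j ∈ S, A i j) + p * q * (∑ i ∈ S, ∑ j ∈ Sᶜ, A i j))
        + (q * p * (∑ i ∈ Sᶜ, ∑ j ∈ S, A i j) + q * q * (∑ i ∈ Sᶜ, ∑ j ∈ Sᶜ, A i j)) := by
        rw [main S p (fun i hi => if_pos hi),
          main Sᶜ q (fun i hi => if_neg (Finset.mem_compl.mp hi))]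
    _ = _ := by ring

private lemma norm_ite {V : Type*} [Fintype V] [DecidableEq V] (S : Finset V) (p q : ℝ) :
    (fun v => if v ∈ S then p else q) ⬝ᵥ (fun v => if v ∈ S then p else q)
      = p ^ 2 * S.card + q ^ 2 * Sᶜ.card := by
  rw [dotProduct, ← Finset.sum_add_sum_compl S]
  congr 1
  · rw [show ∑ i ∈ S, (if i ∈ S then p else q) * (if i ∈ S then p else q) = ∑ _i ∈ S, p ^ 2 from
      Finset.sum_congr rfl fun i hi => by rw [if_pos hi]; ring]
    rw [Finset.sum_const, nsmul_eq_mul, mul_comm]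
  · rw [show ∑ i ∈ Sᶜ, (if i ∈ S then p else q) * (if i ∈ S then p else q)
        = ∑ _i ∈ Sᶜ, q ^ 2 from
      Finset.sum_congr rfl fun i hi => by rw [if_neg (Finset.mem_compl.mp hi)]; ring]
    rw [Finset.sum_const, nsmul_eq_mul, mul_comm]


private lemma haemers_aux {V : Type*} [Fintype V] [Nonempty V] [DecidableEq V]
    (G : SimpleGraph V) [DecidableRel G.Adj] (hδ : 1 ≤ G.minDegree) (hα : Gᶜ.cliqueNum < Fintype.card V)
    (lMax lMin : ℝ)
    (hmax : ∀ x : V → ℝ, x ⬝ᵥ (G.adjMatrix ℝ *ᵥ x) ≤ lMax * (x ⬝ᵥ x))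
    (hmin : ∀ x : V → ℝ, lMin * (x ⬝ᵥ x) ≤ x ⬝ᵥ (G.adjMatrix ℝ *ᵥ x))
    :
    -(lMax * lMin) ≥
      (Gᶜ.cliqueNum : ℝ) * (G.minDegree : ℝ) ^ 2 /
        ((Fintype.card V : ℝ) - (Gᶜ.cliqueNum : ℝ)) := by
  classical
  set A := G.adjMatrix ℝ with hAdef
  obtain ⟨S, hS⟩ := Gᶜ.exists_isNClique_cliqueNum
  have hScard : S.card = Gᶜ.cliqueNum := hS.2
  -- basic numbers
  set a : ℝ := (Gᶜ.cliqueNum : ℝ) with hadef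
  set d : ℝ := (G.minDegree : ℝ) with hddef
  set n : ℝ := (Fintype.card V : ℝ) with hndef
  have ha1 : (1 : ℝ) ≤ a := by
    obtain ⟨v⟩ := ‹Nonempty V›
    have hcl : Gᶜ.IsClique ({v} : Finset V) := by
      simp [SimpleGraph.isClique_iff, Set.pairwise_singleton]
    have := SimpleGraph.IsClique.card_le_cliqueNum (tc := hcl)
    simp only [Finset.card_singleton] at this
    rw [hadef]; exact_mod_cast this
  have ha0 : (0 : ℝ) < a := lt_of_lt_of_le one_pos ha1
  have hd1 : (1 : ℝ) ≤ d := by rw [hddef]; exact_mod_cast hδ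
  have han : a < n := by rw [hadef, hndef]; exact_mod_cast hα
  set m : ℝ := n - a with hmdef
  have hm0 : (0 : ℝ) < m := by rw [hmdef]; linarith
  have hcardc : (Sᶜ.card : ℝ) = m := by
    rw [Finset.card_compl, Nat.cast_sub (by rw [hScard]; exact le_of_lt hα)]
    rw [hmdef, hndef, hScard, hadef]
  have hcardS : (S.card : ℝ) = a := by rw [hScard, hadef]
  -- entries within S vanish
  have hSind : ∀ i ∈ S, ∀ j ∈ S, A i j = 0 := by
    intro i hi j hj
    by_cases hij : i = j
    · subst hij; simp [hAdef]
    · have hadj : Gᶜ.Adj i j := hS.1 hi hj hij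
      rw [SimpleGraph.compl_adj] at hadj
      simp [hAdef, SimpleGraph.adjMatrix_apply, hadj.2]
  have hSS : (∑ i ∈ S, ∑ j ∈ S, A i j) = 0 :=
    Finset.sum_eq_zero fun i hi => Finset.sum_eq_zero fun j hj => hSind i hi j hj
  -- row sums are degrees
  have hrow : ∀ i, ∑ j, A i j = (G.degree i : ℝ) := by
    intro i
    have := SimpleGraph.adjMatrix_mulVec_const_apply (α := ℝ) (G := G) (a := (1:ℝ)) (v := i)
    simpa [Matrix.mulVec, dotProduct, hAdef] using this
  set e : ℝ := ∑ i ∈ S, ∑ j ∈ Sᶜ, A i j with hedef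
  have hade : a * d ≤ e := by
    have h1 : ∀ i ∈ S, (d : ℝ) ≤ ∑ j ∈ Sᶜ, A i j := by
      intro i hi
      have h2 : ∑ j ∈ S, A i j + ∑ j ∈ Sᶜ, A i j = ∑ j, A i j :=
        Finset.sum_add_sum_compl S _
      rw [Finset.sum_eq_zero (fun j hj => hSind i hi j hj), zero_add] at h2
      rw [h2, hrow, hddef]
      exact_mod_cast G.minDegree_le_degree i
    calc a * d = S.card * d := by rw [hcardS]
      _ = ∑ _i ∈ S, d := by rw [Finset.sum_const, nsmul_eq_mul]
      _ ≤ e := by rw [hedef]; exact Finset.sum_le_sum h1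
  have he0 : (0 : ℝ) < e := lt_of_lt_of_le (mul_pos ha0 (lt_of_lt_of_le one_pos hd1)) hade
  have hsymm : (∑ i ∈ Sᶜ, ∑ j ∈ S, A i j) = e := by
    rw [hedef]; refine Finset.sum_comm.trans ?_
    exact Finset.sum_congr rfl fun x _ => Finset.sum_congr rfl fun y _ => by
      rw [hAdef]; exact (G.isSymm_adjMatrix (α := ℝ)).apply x y
  set P : ℝ := ∑ i ∈ Sᶜ, ∑ j ∈ Sᶜ, A i j with hPdef
  set c : ℝ := P / m with hcdef
  have hPc : P = c * m := by rw [hcdef, div_mul_cancel₀ _ (ne_of_gt hm0)]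
  set E : ℝ := e ^ 2 / (a * m) with hEdef
  have hE0 : (0 : ℝ) < E := by rw [hEdef]; positivity
  have hEe : e ^ 2 = E * (a * m) := by
    rw [hEdef, div_mul_cancel₀ _ (by positivity)]
  set D : ℝ := Real.sqrt (c ^ 2 + 4 * E) with hDdef
  have hD2 : D ^ 2 = c ^ 2 + 4 * E := by
    rw [hDdef]; exact Real.sq_sqrt (by positivity)
  have hDc : |c| ≤ D := by
    rw [hDdef, ← Real.sqrt_sq_eq_abs]
    exact Real.sqrt_le_sqrt (by nlinarith)
  set μ₁ : ℝ := (c + D) / 2 with hμ₁def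
  set μ₂ : ℝ := (c - D) / 2 with hμ₂def
  have hμ₁0 : 0 ≤ μ₁ := by
    rw [hμ₁def]; have := neg_abs_le c; linarith
  have hμ₂0 : μ₂ ≤ 0 := by
    rw [hμ₂def]; have := le_abs_self c; linarith
  have hprod : μ₁ * μ₂ = -E := by
    rw [hμ₁def, hμ₂def]
    have h : (c + D) / 2 * ((c - D) / 2) = (c ^ 2 - D ^ 2) / 4 := by ring
    rw [h, hD2]; ring
  have hq₁ : μ₁ ^ 2 = c * μ₁ + E := by
    rw [hμ₁def]
    have h : ((c + D) / 2) ^ 2 = (c ^ 2 + 2 * c * D + D ^ 2) / 4 := by ring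
    rw [h, hD2]; ring
  have hq₂ : μ₂ ^ 2 = c * μ₂ + E := by
    rw [hμ₂def]
    have h : ((c - D) / 2) ^ 2 = (c ^ 2 - 2 * c * D + D ^ 2) / 4 := by ring
    rw [h, hD2]; ring
  -- the key eigenvector identity
  have key : ∀ μ : ℝ, μ ^ 2 = c * μ + E →
      (fun v => if v ∈ S then e else a * μ) ⬝ᵥ (A *ᵥ fun v => if v ∈ S then e else a * μ)
        = μ * ((fun v => if v ∈ S then e else a * μ) ⬝ᵥ (fun v => if v ∈ S then e else a * μ)) := by
    intro μ hμ
    rw [quad_ite A S e (a * μ), norm_ite S e (a * μ), hSS, ← hedef, hsymm, ← hPdef,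
      hcardS, hcardc, hPc]
    linear_combination (-(a ^ 2 * m * μ)) * hμ + (a * μ) * hEe
  have hNpos : ∀ μ : ℝ,
      0 < (fun v => if v ∈ S then e else a * μ) ⬝ᵥ (fun v => if v ∈ S then e else a * μ) := by
    intro μ
    rw [norm_ite S e (a * μ), hcardS, hcardc]
    have h1 : 0 < e ^ 2 * a := mul_pos (pow_pos he0 2) ha0
    have h2 : 0 ≤ (a * μ) ^ 2 * m := mul_nonneg (sq_nonneg _) hm0.le
    linarith
  have hmax₁ : μ₁ ≤ lMax := by
    have h := hmax (fun v => if v ∈ S then e else a * μ₁)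
    rw [key μ₁ hq₁] at h
    exact le_of_mul_le_mul_right (by linarith [h]) (hNpos μ₁)
  have hmin₂ : lMin ≤ μ₂ := by
    have h := hmin (fun v => if v ∈ S then e else a * μ₂)
    rw [key μ₂ hq₂] at h
    exact le_of_mul_le_mul_right (by linarith [h]) (hNpos μ₂)
  have hlM0 : 0 ≤ lMax := le_trans hμ₁0 hmax₁
  have hfin : lMax * lMin ≤ -E := by
    calc lMax * lMin ≤ lMax * μ₂ := mul_le_mul_of_nonneg_left hmin₂ hlM0
      _ ≤ μ₁ * μ₂ := mul_le_mul_of_nonpos_right hmax₁ hμ₂0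
      _ = -E := hprod
  have hgoal : a * d ^ 2 / m ≤ E := by
    rw [hEdef, div_le_div_iff₀ hm0 (by positivity)]
    have h1 : (a * d) ^ 2 ≤ e ^ 2 := pow_le_pow_left₀ (by positivity) hade 2
    calc a * d ^ 2 * (a * m) = (a * d) ^ 2 * m := by ring
      _ ≤ e ^ 2 * m := mul_le_mul_of_nonneg_right h1 hm0.le
  rw [ge_iff_le]
  linarith
end Aux

/-- Haemers' bound: for a graph `G` on `n` vertices with minimum degree `δ ≥ 1` and
independence number `α < n`, `-λ₁·λ_n ≥ α·δ²/(n-α)`. Here the independence number is the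
clique number of the complement. -/
theorem stmt18 {V : Type*} [Fintype V] [Nonempty V] (G : SimpleGraph V) [DecidableRel G.Adj]
    (hδ : 1 ≤ G.minDegree) (hα : Gᶜ.cliqueNum < Fintype.card V) :
    -(lamMax G * lamMin G) ≥
      (Gᶜ.cliqueNum : ℝ) * (G.minDegree : ℝ) ^ 2 /
        ((Fintype.card V : ℝ) - (Gᶜ.cliqueNum : ℝ)) := by
  classical
  have hM : lamMax G
      = Finset.univ.sup' Finset.univ_nonempty (adjMatrix_isHermitian G).eigenvalues := by
    unfold lamMax; congr!
  have hm : lamMin G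
      = Finset.univ.inf' Finset.univ_nonempty (adjMatrix_isHermitian G).eigenvalues := by
    unfold lamMin; congr!
  rw [hM, hm]
  exact haemers_aux G hδ hα _ _
    (fun x => (rayleigh_bounds (adjMatrix_isHermitian G) x).2)
    (fun x => (rayleigh_bounds (adjMatrix_isHermitian G) x).1)
end
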